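/- Let X be a Polish topological vector space over ℝ and let A ⊆ X be a subset that is not null-finite. Then A belongs to the Kuczma–Ger class 𝓑_X: every additive function f : X → ℝ with sup f[A] < ∞ is continuous. -/

import Mathlib

open Set Filter Topology Pointwise MeasureTheory

/-- A Borel set `A` in a topological Abelian group is *Haar-meager* if there is a continuous
map `f` from the Cantor cube `ℕ → Bool` such that `f ⁻¹' (A + x)` is meager for every `x`. -/
def HaarMeager {X : Type*} [TopologicalSpace X] [AddCommGroup X] (A : Set X) : Prop :=
  ∃ f : (ℕ → Bool) → X, Continuous f ∧ ∀ x : X, IsMeagre (f ⁻¹' ((fun a => a + x) '' A))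

/-- A set `A` is *Haar-null* if there is a Borel probability measure `μ` on `X` such that
`μ (A + x) = 0` for every `x ∈ X`. -/
def HaarNull {X : Type*} [MeasurableSpace X] [AddCommGroup X] (A : Set X) : Prop :=
  ∃ μ : Measure X, IsProbabilityMeasure μ ∧ ∀ x : X, μ ((fun a => a + x) '' A) = 0

/-- A subset `T` of the Cantor cube is *thin* if for every coordinate `n`, any two elements
of `T` agreeing at all coordinates except possibly `n` are equal. -/
def IsThinSet (T : Set (ℕ → Bool)) : Prop :=
  ∀ n : ℕ, ∀ s ∈ T, ∀ t ∈ T, (∀ m : ℕ, m ≠ n → s m = t m) → s = t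

/-- A set `A` is *Haar-thin* if there is a continuous map `f` from the Cantor cube such that
`f ⁻¹' (A + x)` is thin for every `x`. -/
def HaarThin {X : Type*} [TopologicalSpace X] [AddCommGroup X] (A : Set X) : Prop :=
  ∃ f : (ℕ → Bool) → X, Continuous f ∧ ∀ x : X, IsThinSet (f ⁻¹' ((fun a => a + x) '' A))

/-- A set `A` is *null-finite* if there is a null sequence `(x n)` such that
`{n | x n + y ∈ A}` is finite for every `y`. -/
def NullFinite {X : Type*} [TopologicalSpace X] [AddCommGroup X] (A : Set X) : Prop :=
  ∃ x : ℕ → X, Tendsto x atTop (nhds 0) ∧ ∀ y : X, {n : ℕ | x n + y ∈ A}.Finite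

/-- A set `A` is *Haar-open* if for every compact `K` and `p ∈ K` there is `x` such that
`K ∩ (A + x)` is a neighborhood of `p` in the subspace `K`. -/
def HaarOpen {X : Type*} [TopologicalSpace X] [AddCommGroup X] (A : Set X) : Prop :=
  ∀ K : Set X, IsCompact K → ∀ p ∈ K, ∃ x : X,
    K ∩ ((fun a => a + x) '' A) ∈ nhdsWithin p K

/-- In a Polish topological vector space `X`, every set `A` that is not null-finite belongs
to the Kuczma–Ger class `𝓑_X`: every additive `f : X → ℝ` bounded above on `A` is
continuous. -/
theorem statement13 {X : Type*} [TopologicalSpace X] [AddCommGroup X] [Module ℝ X]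
    [IsTopologicalAddGroup X] [ContinuousSMul ℝ X] [PolishSpace X]
    (A : Set X) (hA : ¬ NullFinite A)
    (f : X → ℝ) (hadd : ∀ x y : X, f (x + y) = f x + f y)
    (hbdd : BddAbove (f '' A)) :
    Continuous f := by
  classical
  have hf0 : f 0 = 0 := by
    have h := hadd 0 0
    simp only [add_zero] at h
    linarith
  have hneg : ∀ x : X, f (-x) = - f x := by
    intro x
    have h := hadd x (-x)
    simp only [add_neg_cancel, hf0] at h
    linarith
  have hnsmul : ∀ (n : ℕ) (x : X), f (n • x) = n * f x := by
    intro n x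
    induction n with
    | zero => simp [hf0]
    | succ k ih => rw [succ_nsmul, hadd, ih]; push_cast; ring
  -- It suffices to prove continuity at 0
  suffices hc0 : ContinuousAt f 0 by
    rw [continuous_iff_continuousAt]
    intro x
    have h2 : Tendsto (fun y : X => y - x) (𝓝 x) (𝓝 (x - x)) :=
      ((continuous_id.sub continuous_const).tendsto x)
    rw [sub_self] at h2
    have h4 : ContinuousAt (fun y : X => f (y - x)) x := by
      have h5 := Filter.Tendsto.comp (hc0 : Tendsto f (𝓝 0) (𝓝 (f 0))) h2
      simp only [ContinuousAt, sub_self, hf0] at h5 ⊢; exact h5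
    have h1 : ContinuousAt (fun y : X => f x + f (y - x)) x :=
      ContinuousAt.add continuousAt_const h4
    refine h1.congr (Filter.Eventually.of_forall fun y => ?_)
    show f x + f (y - x) = f y
    rw [← hadd]
    congr 1
    abel
  -- Prove continuity at 0 by contradiction
  by_contra hnc
  apply hA
  -- f is unbounded on every neighborhood of 0
  rw [ContinuousAt, hf0, Metric.tendsto_nhds] at hnc
  push_neg at hnc
  obtain ⟨ε, εpos, hε⟩ := hnc
  simp only [← not_lt] at hε
  have hfreq : ∀ U ∈ 𝓝 (0 : X), ∃ z ∈ U, ε ≤ |f z| := by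
    intro U hU
    obtain ⟨z, hzU, hz⟩ := (Filter.frequently_iff.mp hε) hU
    refine ⟨z, hzU, ?_⟩
    rw [Real.dist_eq, sub_zero] at hz
    linarith [not_lt.mp hz]
  have key : ∀ U ∈ 𝓝 (0 : X), ∀ C : ℝ, ∃ z ∈ U, C ≤ f z := by
    intro U hU C
    obtain ⟨m, hm⟩ := exists_nat_ge (C / ε)
    have hCm : C ≤ (m : ℝ) * ε := by
      rw [div_le_iff₀ εpos] at hm
      linarith
    have hg : Continuous (fun w : X => (m : ℕ) • w) := continuous_nsmul m
    have hg' : Continuous (fun w : X => -((m : ℕ) • w)) := hg.neg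
    have hV1 : (fun w : X => (m : ℕ) • w) ⁻¹' U ∈ 𝓝 (0 : X) := by
      apply hg.continuousAt.preimage_mem_nhds
      simpa using hU
    have hV2 : (fun w : X => -((m : ℕ) • w)) ⁻¹' U ∈ 𝓝 (0 : X) := by
      apply hg'.continuousAt.preimage_mem_nhds
      simpa using hU
    obtain ⟨w, hwV, hw⟩ := hfreq _ (Filter.inter_mem hV1 hV2)
    rcases le_or_gt 0 (f w) with hsign | hsign
    · refine ⟨(m : ℕ) • w, hwV.1, ?_⟩
      rw [hnsmul]
      have : ε ≤ f w := by rwa [abs_of_nonneg hsign] at hw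
      calc C ≤ (m : ℝ) * ε := hCm
        _ ≤ (m : ℝ) * f w := by
            apply mul_le_mul_of_nonneg_left this (by positivity)
    · refine ⟨-((m : ℕ) • w), hwV.2, ?_⟩
      rw [hneg, hnsmul]
      have : ε ≤ -f w := by rwa [abs_of_neg hsign] at hw
      calc C ≤ (m : ℝ) * ε := hCm
        _ ≤ (m : ℝ) * (-f w) := by
            apply mul_le_mul_of_nonneg_left this (by positivity)
        _ = -((m : ℝ) * f w) := by ring
  -- Build the null sequence
  obtain ⟨b, hb⟩ := (𝓝 (0 : X)).exists_antitone_basis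
  have hx : ∀ n : ℕ, ∃ z ∈ b n, (n : ℝ) ≤ f z := fun n => key (b n) (hb.mem n) n
  choose x hxb hxf using hx
  obtain ⟨M, hM⟩ := hbdd
  refine ⟨x, hb.tendsto hxb, fun y => ?_⟩
  apply Set.Finite.subset (Set.finite_Iic (⌈M - f y⌉₊))
  intro n hn
  simp only [Set.mem_setOf_eq] at hn
  have hfa : f (x n + y) ≤ M := hM ⟨x n + y, hn, rfl⟩
  rw [hadd] at hfa
  have h1 : (n : ℝ) ≤ M - f y := le_trans (hxf n) (by linarith)
  have h2 : (n : ℝ) ≤ (⌈M - f y⌉₊ : ℝ) := le_trans h1 (Nat.le_ceil _)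
  exact_mod_cast h2
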